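/- Let k ≥ 2 be an integer, p_k := log₂ C(2k,k), and define ψ_k(y) := p_k · y^{2 − p_k/k} + y^{1 − p_k/k} − y − p_k for y > 0. Then ψ_k(y) > 0 for every y ∈ (1, 9]. -/

import Mathlib

open Real

/-! Auxiliary natural-number estimates for the central binomial coefficient. -/

lemma psi_natA (n : ℕ) (hn : 2 ≤ n) : 2^n < Nat.centralBinom n := by
  induction n with
  | zero => omega
  | succ m ih =>
    rcases Nat.lt_or_ge m 2 with h | h
    · interval_cases m
      · omega
      · decide
    · have ihm := ih h
      have key := Nat.succ_mul_centralBinom_succ m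
      have h1 : (m+1) * 2^(m+1) < (m+1) * Nat.centralBinom (m+1) := by
        rw [key]
        calc (m+1) * 2^(m+1) = (2*m+2) * 2^m := by ring
        _ ≤ (2*(2*m+1)) * 2^m := Nat.mul_le_mul_right _ (by omega)
        _ < (2*(2*m+1)) * Nat.centralBinom m := mul_lt_mul_of_pos_left ihm (by omega)
      exact Nat.lt_of_mul_lt_mul_left h1

lemma psi_natB (n : ℕ) (hn : 1 ≤ n) : 16^n ≤ 4*n * (Nat.centralBinom n)^2 := by
  induction n with
  | zero => omega
  | succ m ih =>
    rcases Nat.lt_or_ge m 1 with h | h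
    · interval_cases m
      decide
    · have ihm := ih h
      have key := Nat.succ_mul_centralBinom_succ m
      set c := Nat.centralBinom m with hc
      have poly : 4*m*(m+1) ≤ (2*m+1)^2 := by nlinarith
      have h1 : (m+1)^2 * 16^(m+1) ≤ (m+1)^2 * (4*(m+1) * (Nat.centralBinom (m+1))^2) := by
        have e1 : (m+1)^2 * (4*(m+1) * (Nat.centralBinom (m+1))^2)
            = 4*(m+1) * ((m+1) * Nat.centralBinom (m+1))^2 := by ring
        rw [e1, key]
        calc (m+1)^2 * 16^(m+1) = (16*(m+1)^2) * 16^m := by ring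
        _ ≤ (16*(m+1)^2) * (4*m*c^2) := Nat.mul_le_mul_left _ ihm
        _ = (4*m*(m+1)) * (16*(m+1)*c^2) := by ring
        _ ≤ ((2*m+1)^2) * (16*(m+1)*c^2) := Nat.mul_le_mul_right _ poly
        _ = 4*(m+1) * (2*(2*m+1)*c)^2 := by ring
      exact Nat.le_of_mul_le_mul_left h1 (by positivity)

lemma psi_natC (n : ℕ) (hn : 1 ≤ n) : (3*n+1) * (Nat.centralBinom n)^2 ≤ 16^n := by
  induction n with
  | zero => omega
  | succ m ih =>
    rcases Nat.lt_or_ge m 1 with h | h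
    · interval_cases m
      decide
    · have ihm := ih h
      have key := Nat.succ_mul_centralBinom_succ m
      set c := Nat.centralBinom m with hc
      have poly : (3*m+4)*4*(2*m+1)^2 ≤ 16*(m+1)^2*(3*m+1) := by nlinarith
      have h1 : (m+1)^2 * ((3*(m+1)+1) * (Nat.centralBinom (m+1))^2) ≤ (m+1)^2 * 16^(m+1) := by
        have e1 : (m+1)^2 * ((3*(m+1)+1) * (Nat.centralBinom (m+1))^2)
            = (3*m+4) * ((m+1) * Nat.centralBinom (m+1))^2 := by ring
        rw [e1, key]
        calc (3*m+4) * (2*(2*m+1)*c)^2 = ((3*m+4)*4*(2*m+1)^2) * c^2 := by ring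
        _ ≤ (16*(m+1)^2*(3*m+1)) * c^2 := Nat.mul_le_mul_right _ poly
        _ = (16*(m+1)^2) * ((3*m+1)*c^2) := by ring
        _ ≤ (16*(m+1)^2) * 16^m := Nat.mul_le_mul_left _ ihm
        _ = (m+1)^2 * 16^(m+1) := by ring
      exact Nat.le_of_mul_le_mul_left h1 (by positivity)

/-- From `c^n ≤ b^m` conclude `c ≤ b^(m/n)` (real power). -/
lemma psi_rpow_div_ge {b c : ℝ} (hb : 0 ≤ b) (hc : 0 ≤ c) {m n : ℕ} (hn : n ≠ 0)
    (h : c ^ n ≤ b ^ m) : c ≤ b ^ ((m : ℝ) / n) := by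
  have h0 : (0:ℝ) ≤ b ^ ((m:ℝ)/n) := Real.rpow_nonneg hb _
  have key : (b ^ ((m:ℝ)/n)) ^ n = b ^ m := by
    rw [← Real.rpow_natCast (b ^ ((m:ℝ)/n)) n, ← Real.rpow_mul hb,
      div_mul_cancel₀ _ (by exact_mod_cast hn : ((n:ℝ) ≠ 0)), Real.rpow_natCast]
  exact le_of_pow_le_pow_left₀ hn h0 (by rw [key]; exact h)

lemma psi_L3gt : (79:ℝ)/50 < Real.logb 2 3 := by
  rw [Real.lt_logb_iff_rpow_lt (by norm_num) (by norm_num)]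
  have key : ((2:ℝ) ^ ((79:ℝ)/50)) ^ (50:ℕ) = 2 ^ (79:ℕ) := by
    rw [← Real.rpow_natCast ((2:ℝ) ^ ((79:ℝ)/50)) 50, ← Real.rpow_mul (by norm_num),
      show (79:ℝ)/50 * ((50:ℕ):ℝ) = ((79:ℕ):ℝ) by push_cast; ring, Real.rpow_natCast]
  apply lt_of_pow_lt_pow_left₀ 50 (by norm_num)
  rw [key]; norm_num

/-- Central endpoint reduction lemma. -/
lemma psi_key_lemma (k : ℕ) (hk : 2 ≤ k) (p q : ℝ) (hkp : (k:ℝ) < p)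
    (hs : Real.logb 2 (3*(k:ℝ)+1) ≤ 2*(2*(k:ℝ) - p))
    (hq : q ≤ p) (hq0 : 0 < 9*q+1)
    (hmain : (1 + 80/(9*q+1))^k ≤ (3*(k:ℝ)+1) ^ ((79:ℝ)/50)) :
    (9:ℝ)^((p-(k:ℝ))/(k:ℝ)) * (9+p) < 9*p+1 := by
  have hk0 : (0:ℝ) < k := by positivity
  have hkne : (k:ℝ) ≠ 0 := ne_of_gt hk0
  have hkn0 : k ≠ 0 := by omega
  have hp0 : (0:ℝ) < p := lt_trans hk0 hkp
  have h9p : (0:ℝ) < 9*p+1 := by linarith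
  have h3k1 : (1:ℝ) < 3*(k:ℝ)+1 := by
    have : (1:ℝ) ≤ (k:ℝ) := by exact_mod_cast Nat.one_le_of_lt hk
    linarith
  have h3k0 : (0:ℝ) < 3*(k:ℝ)+1 := by linarith
  set s : ℝ := 2*(k:ℝ) - p with hsdef
  have hs0 : 0 < s := by
    have : (0:ℝ) < Real.logb 2 (3*(k:ℝ)+1) := Real.logb_pos (by norm_num) h3k1
    linarith
  set Lk : ℝ := Real.logb 2 (3*(k:ℝ)+1) with hLk
  have swap : (3*(k:ℝ)+1) ^ (Real.logb 2 3) = (3:ℝ) ^ Lk := by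
    have h1 : (3*(k:ℝ)+1) = 2 ^ Lk :=
      (Real.rpow_logb (by norm_num) (by norm_num) h3k0).symm
    calc (3*(k:ℝ)+1) ^ (Real.logb 2 3) = ((2:ℝ) ^ Lk) ^ (Real.logb 2 3) := by rw [← h1]
    _ = (2:ℝ) ^ (Lk * Real.logb 2 3) := (Real.rpow_mul (by norm_num) _ _).symm
    _ = (2:ℝ) ^ (Real.logb 2 3 * Lk) := by ring_nf
    _ = ((2:ℝ) ^ (Real.logb 2 3)) ^ Lk := Real.rpow_mul (by norm_num) _ _
    _ = (3:ℝ) ^ Lk := by rw [Real.rpow_logb (by norm_num) (by norm_num) (by norm_num)]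
  have h9 : (9:ℝ) = (3:ℝ) ^ (2:ℝ) := by
    rw [show (2:ℝ) = ((2:ℕ):ℝ) by norm_num, Real.rpow_natCast]; norm_num
  have h2 : (3:ℝ) ^ Lk ≤ (9:ℝ) ^ s := by
    calc (3:ℝ) ^ Lk ≤ (3:ℝ) ^ (2*s) := Real.rpow_le_rpow_of_exponent_le (by norm_num) hs
    _ = ((3:ℝ) ^ (2:ℝ)) ^ s := by rw [← Real.rpow_mul (by norm_num)]
    _ = (9:ℝ) ^ s := by rw [← h9]
  have hqp : 1 + 80/(9*p+1) ≤ 1 + 80/(9*q+1) := by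
    have : 80/(9*p+1) ≤ 80/(9*q+1) :=
      div_le_div_of_nonneg_left (by norm_num) hq0 (by linarith)
    linarith
  have hB : (1 + 80/(9*p+1))^k < (9:ℝ) ^ s := by
    calc (1 + 80/(9*p+1))^k ≤ (1 + 80/(9*q+1))^k :=
          pow_le_pow_left₀ (by positivity) hqp k
    _ ≤ (3*(k:ℝ)+1) ^ ((79:ℝ)/50) := hmain
    _ < (3*(k:ℝ)+1) ^ (Real.logb 2 3) := by
          rw [Real.rpow_lt_rpow_left_iff h3k1]; exact psi_L3gt
    _ = (3:ℝ) ^ Lk := swap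
    _ ≤ (9:ℝ) ^ s := h2
  have h9sk : ((9:ℝ)^(s/(k:ℝ)))^k = (9:ℝ)^s := by
    rw [← Real.rpow_natCast ((9:ℝ)^(s/(k:ℝ))) k, ← Real.rpow_mul (by norm_num),
      div_mul_cancel₀ _ hkne]
  have hC : 1 + 80/(9*p+1) < (9:ℝ)^(s/(k:ℝ)) := by
    apply lt_of_pow_lt_pow_left₀ k (Real.rpow_nonneg (by norm_num) _)
    rw [h9sk]; exact hB
  have h9sk0 : (0:ℝ) < (9:ℝ)^(s/(k:ℝ)) := Real.rpow_pos_of_pos (by norm_num) _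
  have hrw : (p - (k:ℝ))/(k:ℝ) = 1 - s/(k:ℝ) := by
    rw [hsdef]; field_simp; ring
  rw [hrw, Real.rpow_sub (by norm_num : (0:ℝ) < 9), Real.rpow_one, div_mul_eq_mul_div,
    div_lt_iff₀ h9sk0]
  have hmul := mul_lt_mul_of_pos_left hC h9p
  have hid : (9*p+1) * (1 + 80/(9*p+1)) = 9*(9+p) := by field_simp; ring
  nlinarith [hmul, hid]

lemma psi_case_small (k : ℕ) (hk : 2 ≤ k) (p : ℝ) (hkp : (k:ℝ) < p)
    (hs : Real.logb 2 (3*(k:ℝ)+1) ≤ 2*(2*(k:ℝ) - p))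
    (hlb : 2*(k:ℝ) - Real.logb 2 (4*(k:ℝ))/2 ≤ p)
    (m : ℕ) (h4k : (4*(k:ℝ))^(100:ℕ) ≤ 2^m)
    (hq0 : 0 < 9*(2*(k:ℝ) - (m:ℝ)/100/2)+1)
    (hmain : ((1+80/(9*(2*(k:ℝ) - (m:ℝ)/100/2)+1))^k)^(50:ℕ) ≤ (3*(k:ℝ)+1)^(79:ℕ)) :
    (9:ℝ)^((p-(k:ℝ))/(k:ℝ)) * (9+p) < 9*p+1 := by
  have hk0 : (0:ℝ) < k := by positivity
  apply psi_key_lemma k hk p (2*(k:ℝ) - (m:ℝ)/100/2) hkp hs ?_ hq0 ?_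
  · have h1 : Real.logb 2 (4*(k:ℝ)) ≤ (m:ℝ)/100 := by
      rw [Real.logb_le_iff_le_rpow (by norm_num) (by positivity)]
      have h2 := psi_rpow_div_ge (b := (2:ℝ)) (m := m) (n := 100) (by norm_num) (by positivity)
        (by norm_num) h4k
      simpa using h2
    linarith
  · have h2 := psi_rpow_div_ge (b := 3*(k:ℝ)+1) (m := 79) (n := 50) (by positivity) (by positivity)
      (by norm_num) hmain
    simpa using h2

lemma psi_nat8 (m : ℕ) (hm : 8 ≤ m) : 8*m ≤ 2^m := by
  induction m with
  | zero => omega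
  | succ n ih =>
    rcases Nat.lt_or_ge n 8 with h | h
    · interval_cases n <;> simp_all
    · have h2 : 64 ≤ 2^n := le_trans (by omega) (ih h)
      calc 8*(n+1) = 8*n + 8 := by ring
      _ ≤ 2^n + 2^n := by omega
      _ = 2^(n+1) := by ring

lemma psi_case_big (k : ℕ) (hk : 16 ≤ k) (p : ℝ) (hkp : (k:ℝ) < p)
    (hs : Real.logb 2 (3*(k:ℝ)+1) ≤ 2*(2*(k:ℝ) - p))
    (hlb : 2*(k:ℝ) - Real.logb 2 (4*(k:ℝ))/2 ≤ p) :
    (9:ℝ)^((p-(k:ℝ))/(k:ℝ)) * (9+p) < 9*p+1 := by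
  have hk16 : (16:ℝ) ≤ (k:ℝ) := by exact_mod_cast hk
  have hk0 : (0:ℝ) < k := by linarith
  have hlogk : Real.logb 2 (k:ℝ) ≤ (k:ℝ)/2 := by
    have hm8 : 8 ≤ k/2 := by omega
    have hkm : k ≤ 2^(k/2) := by have := psi_nat8 (k/2) hm8; omega
    have hcast : (k:ℝ) ≤ (2:ℝ)^(((k/2 : ℕ)):ℝ) := by
      rw [Real.rpow_natCast]
      exact_mod_cast hkm
    have hmk2 : (((k/2:ℕ)):ℝ) ≤ (k:ℝ)/2 := by
      have h1 : 2*(k/2) ≤ k := by omega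
      have h2 : ((2*(k/2):ℕ):ℝ) ≤ (k:ℝ) := by exact_mod_cast h1
      push_cast at h2
      linarith
    calc Real.logb 2 (k:ℝ) ≤ Real.logb 2 ((2:ℝ)^(((k/2:ℕ)):ℝ)) :=
          Real.logb_le_logb_of_le (by norm_num) (by positivity) hcast
    _ = (((k/2:ℕ)):ℝ) := Real.logb_rpow (by norm_num) (by norm_num)
    _ ≤ (k:ℝ)/2 := hmk2
  have hlog4k : Real.logb 2 (4*(k:ℝ)) ≤ 2 + (k:ℝ)/2 := by
    rw [Real.logb_mul (by norm_num) (by positivity)]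
    have h4 : Real.logb 2 (4:ℝ) = 2 := by
      rw [show (4:ℝ) = 2^(2:ℕ) by norm_num, Real.logb_pow, Real.logb_self_eq_one (by norm_num)]
      norm_num
    linarith
  have hlogpos : 0 ≤ Real.logb 2 (4*(k:ℝ)) := Real.logb_nonneg (by norm_num) (by linarith)
  obtain ⟨q, hqdef⟩ : ∃ q : ℝ, q = 2*(k:ℝ) - Real.logb 2 (4*(k:ℝ))/2 := ⟨_, rfl⟩
  have hq1 : (63:ℝ)/4*(k:ℝ) - 8 ≤ 9*q+1 := by rw [hqdef]; linarith
  have hq0 : 0 < 9*q+1 := by linarith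
  apply psi_key_lemma k (by omega) p q hkp hs (by rw [hqdef]; exact hlb) hq0
  obtain ⟨x, hxdef⟩ : ∃ x : ℝ, x = 80/(9*q+1) := ⟨_, rfl⟩
  rw [← hxdef]
  have hx0 : 0 ≤ x := by rw [hxdef]; positivity
  have hkx : (k:ℝ)*x < 6 := by
    rw [hxdef, mul_div_assoc', div_lt_iff₀ hq0]
    nlinarith
  calc (1+x)^k ≤ (Real.exp x)^k := by
        apply pow_le_pow_left₀ (by linarith)
        linarith [Real.add_one_le_exp x]
  _ = Real.exp ((k:ℝ)*x) := (Real.exp_nat_mul x k).symm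
  _ ≤ Real.exp 6 := Real.exp_le_exp.2 (le_of_lt hkx)
  _ ≤ 404 := by
      have h6 : Real.exp 6 = (Real.exp 1)^(6:ℕ) := by
        rw [← Real.exp_nat_mul]; norm_num
      rw [h6]
      calc (Real.exp 1)^(6:ℕ) ≤ (2.7182818286:ℝ)^(6:ℕ) :=
            pow_le_pow_left₀ (le_of_lt (Real.exp_pos 1)) (le_of_lt Real.exp_one_lt_d9) 6
      _ ≤ 404 := by norm_num
  _ ≤ (49:ℝ) ^ ((79:ℝ)/50) := by
      have h := psi_rpow_div_ge (b := (49:ℝ)) (c := 404) (m := 79) (n := 50) (by norm_num)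
        (by norm_num) (by norm_num) (by norm_num)
      simpa using h
  _ ≤ (3*(k:ℝ)+1) ^ ((79:ℝ)/50) := by
      apply Real.rpow_le_rpow (by norm_num) (by linarith) (by norm_num)

lemma psi_endpoint (k : ℕ) (hk : 2 ≤ k) (p : ℝ) (hkp : (k:ℝ) < p)
    (hs : Real.logb 2 (3*(k:ℝ)+1) ≤ 2*(2*(k:ℝ) - p))
    (hlb : 2*(k:ℝ) - Real.logb 2 (4*(k:ℝ))/2 ≤ p) :
    (9:ℝ)^((p-(k:ℝ))/(k:ℝ)) * (9+p) < 9*p+1 := by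
  rcases Nat.lt_or_ge k 16 with h16 | h16
  · interval_cases k
    · exact psi_case_small 2 hk p hkp hs hlb 300 (by norm_num; norm_cast) (by norm_num) (by norm_num)
    · exact psi_case_small 3 hk p hkp hs hlb 359 (by norm_num; norm_cast) (by norm_num) (by norm_num)
    · exact psi_case_small 4 hk p hkp hs hlb 400 (by norm_num; norm_cast) (by norm_num) (by norm_num)
    · exact psi_case_small 5 hk p hkp hs hlb 433 (by norm_num; norm_cast) (by norm_num) (by norm_num)
    · exact psi_case_small 6 hk p hkp hs hlb 459 (by norm_num; norm_cast) (by norm_num) (by norm_num)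
    · exact psi_case_small 7 hk p hkp hs hlb 481 (by norm_num; norm_cast) (by norm_num) (by norm_num)
    · exact psi_case_small 8 hk p hkp hs hlb 500 (by norm_num; norm_cast) (by norm_num) (by norm_num)
    · exact psi_case_small 9 hk p hkp hs hlb 517 (by norm_num; norm_cast) (by norm_num) (by norm_num)
    · exact psi_case_small 10 hk p hkp hs hlb 533 (by norm_num; norm_cast) (by norm_num) (by norm_num)
    · exact psi_case_small 11 hk p hkp hs hlb 546 (by norm_num; norm_cast) (by norm_num) (by norm_num)
    · exact psi_case_small 12 hk p hkp hs hlb 559 (by norm_num; norm_cast) (by norm_num) (by norm_num)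
    · exact psi_case_small 13 hk p hkp hs hlb 571 (by norm_num; norm_cast) (by norm_num) (by norm_num)
    · exact psi_case_small 14 hk p hkp hs hlb 581 (by norm_num; norm_cast) (by norm_num) (by norm_num)
    · exact psi_case_small 15 hk p hkp hs hlb 591 (by norm_num; norm_cast) (by norm_num) (by norm_num)
  · exact psi_case_big k h16 p hkp hs hlb

lemma psi_concave (K p : ℝ) (hK : 1 ≤ K) (hKp : K ≤ p) (hp2 : p + 1 ≤ 2*K) :
    ConcaveOn ℝ (Set.Icc 1 9) (fun y : ℝ => p * y^(2 - p/K) + y^(1 - p/K) - y - p) := by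
  have hK0 : (0:ℝ) < K := by linarith
  have hp0 : (0:ℝ) < p := by linarith
  have hKne : K ≠ 0 := ne_of_gt hK0
  have ha1 : 1 ≤ p/K := (one_le_div hK0).2 hKp
  have haK : p/K * K = p := div_mul_cancel₀ p hKne
  apply concaveOn_of_hasDerivWithinAt2_nonpos (f' := fun y : ℝ =>
      p * ((2 - p/K) * y^(2 - p/K - 1)) + (1 - p/K) * y^(1 - p/K - 1) - 1)
    (f'' := fun y : ℝ =>
      p * ((2 - p/K) * ((2 - p/K - 1) * y^(2 - p/K - 1 - 1)))
        + (1 - p/K) * ((1 - p/K - 1) * y^(1 - p/K - 1 - 1)))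
    (convex_Icc 1 9)
  · have c1 : ContinuousOn (fun y : ℝ => y^(2 - p/K)) (Set.Icc 1 9) := fun x hx =>
      (Real.continuousAt_rpow_const x _
        (Or.inl (by rcases hx with ⟨h1, _⟩; positivity))).continuousWithinAt
    have c2 : ContinuousOn (fun y : ℝ => y^(1 - p/K)) (Set.Icc 1 9) := fun x hx =>
      (Real.continuousAt_rpow_const x _
        (Or.inl (by rcases hx with ⟨h1, _⟩; positivity))).continuousWithinAt
    exact (((continuousOn_const.mul c1).add c2).sub continuousOn_id).sub continuousOn_const
  · intro x hx
    rw [interior_Icc] at hx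
    have hx0 : x ≠ 0 := by rcases hx with ⟨h1, _⟩; positivity
    exact ((((Real.hasDerivAt_rpow_const (Or.inl hx0)).const_mul p).add
      (Real.hasDerivAt_rpow_const (Or.inl hx0))).sub (hasDerivAt_id x)).sub_const p
      |>.hasDerivWithinAt
  · intro x hx
    rw [interior_Icc] at hx
    have hx0 : x ≠ 0 := by rcases hx with ⟨h1, _⟩; positivity
    have d1 : HasDerivAt (fun y : ℝ => p * ((2 - p/K) * y^(2 - p/K - 1)))
        (p * ((2 - p/K) * ((2 - p/K - 1) * x^(2 - p/K - 1 - 1)))) x :=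
      ((Real.hasDerivAt_rpow_const (Or.inl hx0)).const_mul (2 - p/K)).const_mul p
    have d2 : HasDerivAt (fun y : ℝ => (1 - p/K) * y^(1 - p/K - 1))
        ((1 - p/K) * ((1 - p/K - 1) * x^(1 - p/K - 1 - 1))) x :=
      (Real.hasDerivAt_rpow_const (Or.inl hx0)).const_mul (1 - p/K)
    exact ((d1.add d2).sub_const 1).hasDerivWithinAt
  · intro x hx
    rw [interior_Icc] at hx
    obtain ⟨hx1, hx9⟩ := hx
    have hx0 : (0:ℝ) < x := by linarith
    have he1 : (2 : ℝ) - p/K - 1 - 1 = -(p/K) := by ring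
    have he2 : (1 : ℝ) - p/K - 1 - 1 = -(p/K) - 1 := by ring
    rw [he1, he2]
    have hT1 : (0:ℝ) < x ^ (-(p/K)) := Real.rpow_pos_of_pos hx0 _
    have hT2 : (0:ℝ) < x ^ (-(p/K) - 1) := Real.rpow_pos_of_pos hx0 _
    have hrel : x ^ (-(p/K) - 1) * x = x ^ (-(p/K)) := by
      rw [← Real.rpow_add_one (ne_of_gt hx0)]
      ring_nf
    have hT21 : x ^ (-(p/K) - 1) ≤ x ^ (-(p/K)) := by nlinarith
    have key1 : p/K ≤ p * (2 - p/K) := by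
      rw [← mul_le_mul_iff_of_pos_right hK0, haK]
      nlinarith
    have hbig : p/K * x ^ (-(p/K) - 1) ≤ p * (2 - p/K) * x ^ (-(p/K)) := by
      have s1 : p/K * x ^ (-(p/K) - 1) ≤ p/K * x ^ (-(p/K)) :=
        mul_le_mul_of_nonneg_left hT21 (by positivity)
      have s2 : p/K * x ^ (-(p/K)) ≤ p * (2 - p/K) * x ^ (-(p/K)) :=
        mul_le_mul_of_nonneg_right key1 (le_of_lt hT1)
      linarith
    nlinarith [mul_le_mul_of_nonneg_left hbig (show (0:ℝ) ≤ p/K - 1 by linarith)]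

/-- For integer `k ≥ 2` and `p_k = log₂ C(2k,k)`, the function
`ψ_k(y) = p_k y^{2−p_k/k} + y^{1−p_k/k} − y − p_k` is positive on `(1, 9]`. -/
theorem psi_positive (k : ℕ) (hk : 2 ≤ k)
    (pk : ℝ) (hpk : pk = Real.logb 2 (Nat.choose (2 * k) k))
    (y : ℝ) (hy : y ∈ Set.Ioc (1 : ℝ) 9) :
    pk * y ^ (2 - pk / k) + y ^ (1 - pk / k) - y - pk > 0 := by
  obtain ⟨hy1, hy9⟩ := hy
  have hk0 : (0:ℝ) < k := by positivity
  have hkne : (k:ℝ) ≠ 0 := ne_of_gt hk0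
  have hk1 : (2:ℝ) ≤ (k:ℝ) := by exact_mod_cast hk
  -- rewrite in terms of the central binomial coefficient
  have hCB : (Nat.choose (2 * k) k : ℝ) = (Nat.centralBinom k : ℝ) := by
    rw [Nat.centralBinom_eq_two_mul_choose]
  rw [hCB] at hpk
  have hCpos : (0:ℝ) < (Nat.centralBinom k : ℝ) := by
    exact_mod_cast Nat.centralBinom_pos k
  -- fact 1 : k < pk
  have hkp : (k:ℝ) < pk := by
    have h1 : ((2:ℝ))^(k:ℕ) < (Nat.centralBinom k : ℝ) := by
      exact_mod_cast psi_natA k hk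
    have h2 : Real.logb 2 ((2:ℝ)^(k:ℕ)) < Real.logb 2 (Nat.centralBinom k : ℝ) :=
      Real.logb_lt_logb (by norm_num) (by positivity) h1
    rw [← Real.rpow_natCast 2 k, Real.logb_rpow (by norm_num) (by norm_num)] at h2
    rw [hpk]; exact h2
  -- log forms of the nat bounds
  have hlog16 : Real.logb 2 ((16:ℝ)^(k:ℕ)) = 4*(k:ℝ) := by
    rw [show (16:ℝ) = 2^(4:ℕ) by norm_num, ← pow_mul, ← Real.rpow_natCast 2 (4*k),
      Real.logb_rpow (by norm_num) (by norm_num)]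
    push_cast; ring
  -- fact 2 : lower bound on pk
  have hlb : 2*(k:ℝ) - Real.logb 2 (4*(k:ℝ))/2 ≤ pk := by
    have h1 : ((16:ℝ))^(k:ℕ) ≤ 4*(k:ℝ) * (Nat.centralBinom k : ℝ)^2 := by
      exact_mod_cast psi_natB k (by omega)
    have h2 : Real.logb 2 ((16:ℝ)^(k:ℕ)) ≤
        Real.logb 2 (4*(k:ℝ) * (Nat.centralBinom k : ℝ)^2) :=
      Real.logb_le_logb_of_le (by norm_num) (by positivity) h1
    rw [hlog16, Real.logb_mul (by positivity) (by positivity), Real.logb_pow] at h2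
    rw [hpk]
    push_cast at h2
    linarith
  -- fact 3 : upper bound on pk
  have hs : Real.logb 2 (3*(k:ℝ)+1) ≤ 2*(2*(k:ℝ) - pk) := by
    have h1 : (3*(k:ℝ)+1) * (Nat.centralBinom k : ℝ)^2 ≤ ((16:ℝ))^(k:ℕ) := by
      exact_mod_cast psi_natC k (by omega)
    have h2 : Real.logb 2 ((3*(k:ℝ)+1) * (Nat.centralBinom k : ℝ)^2) ≤
        Real.logb 2 ((16:ℝ)^(k:ℕ)) :=
      Real.logb_le_logb_of_le (by norm_num) (by positivity) h1
    rw [hlog16, Real.logb_mul (by positivity) (by positivity), Real.logb_pow] at h2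
    rw [hpk]
    push_cast at h2
    linarith
  -- endpoint positivity : ψ(9) > 0
  have hend := psi_endpoint k hk pk hkp hs hlb
  have hpow9 : (0:ℝ) < (9:ℝ)^(1 - pk/(k:ℝ)) := Real.rpow_pos_of_pos (by norm_num) _
  have he0 : (9:ℝ)^((pk-(k:ℝ))/(k:ℝ)) * (9:ℝ)^(1 - pk/(k:ℝ)) = 1 := by
    rw [← Real.rpow_add (by norm_num)]
    rw [show (pk-(k:ℝ))/(k:ℝ) + (1 - pk/(k:ℝ)) = 0 by field_simp; ring]
    exact Real.rpow_zero 9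
  have he2 : (9:ℝ)^(2 - pk/(k:ℝ)) = 9 * (9:ℝ)^(1 - pk/(k:ℝ)) := by
    rw [show (2:ℝ) - pk/(k:ℝ) = 1 + (1 - pk/(k:ℝ)) by ring,
      Real.rpow_add (by norm_num), Real.rpow_one]
  have hf9 : 0 < pk * (9:ℝ)^(2 - pk/(k:ℝ)) + (9:ℝ)^(1 - pk/(k:ℝ)) - 9 - pk := by
    have h3 := mul_lt_mul_of_pos_right hend hpow9
    rw [he2]
    nlinarith [h3, he0]
  -- concavity
  have hconc := psi_concave (k:ℝ) pk (by linarith) (le_of_lt hkp) (by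
    have h4 : Real.logb 2 (4:ℝ) ≤ Real.logb 2 (3*(k:ℝ)+1) :=
      Real.logb_le_logb_of_le (by norm_num) (by norm_num) (by linarith)
    have h5 : Real.logb 2 (4:ℝ) = 2 := by
      rw [show (4:ℝ) = 2^(2:ℕ) by norm_num, Real.logb_pow, Real.logb_self_eq_one (by norm_num)]
      norm_num
    linarith)
  rcases eq_or_lt_of_le hy9 with heq | hlt
  · rw [heq]
    exact hf9
  · have h1m : (1:ℝ) ∈ Set.Icc (1:ℝ) 9 := by constructor <;> norm_num
    have h9m : (9:ℝ) ∈ Set.Icc (1:ℝ) 9 := by constructor <;> norm_num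
    have hcomb := hconc.2 h1m h9m (show (0:ℝ) ≤ (9-y)/8 by linarith)
      (show (0:ℝ) ≤ (y-1)/8 by linarith) (by ring)
    simp only [smul_eq_mul] at hcomb
    rw [show (9-y)/8 * 1 + (y-1)/8 * 9 = y by ring] at hcomb
    simp only [Real.one_rpow, mul_one] at hcomb
    have hff : (y-1)/8 > 0 := by linarith
    nlinarith [hcomb, hf9, mul_pos hff hf9]
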